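/- Let (Ω, F, ℙ, σ) be an ergodic measure-preserving system and φ ∈ L¹(Ω, ℝ). If there exists c > 0 such that the set Ω*_c = {ω : S_n φ(ω) > c for all n ≥ 1} has positive ℙ-measure, then ∫ φ dℙ > 0. -/

import Mathlib

open MeasureTheory Filter Set Topology ENNReal

private lemma exists_cutoff' {Q : ℕ → Prop}
    (hQ0 : Q 0) (hQ : ∀ k, Q (k+1) → Q k) (m : ℕ) (hm : 1 ≤ m) :
    ∃ M, 1 ≤ M ∧ M ≤ m ∧ ∀ k < m, (Q k ↔ k < M) := by
  classical
  have down : ∀ k j, j ≤ k → Q k → Q j := by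
    intro k
    induction k with
    | zero => intro j hj h; simpa [Nat.le_zero.mp hj] using h
    | succ k ih =>
      intro j hj h
      by_cases hjk : j ≤ k
      · exact ih j hjk (hQ k h)
      · have : j = k + 1 := by omega
        exact this ▸ h
  by_cases h : ∀ k < m, Q k
  · exact ⟨m, hm, le_rfl, fun k hk => ⟨fun _ => hk, fun _ => h k hk⟩⟩
  · push_neg at h
    obtain ⟨k0, hk0m, hk0⟩ := h
    have hex : ∃ k, ¬ Q k := ⟨k0, hk0⟩
    set M := Nat.find hex with hM
    have hMspec : ¬ Q M := Nat.find_spec hex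
    have hM1 : 1 ≤ M := by
      rcases Nat.eq_zero_or_pos M with h0 | h0
      · exact absurd (h0 ▸ hQ0) hMspec
      · exact h0
    have hMm : M ≤ m := le_of_lt (lt_of_le_of_lt (Nat.find_min' hex hk0) hk0m)
    refine ⟨M, hM1, hMm, fun k _ => ⟨fun hk => ?_, fun hk => ?_⟩⟩
    · by_contra hh
      exact hMspec (down k M (Nat.le_of_not_lt hh) hk)
    · by_contra hh
      exact Nat.find_min hex hk hh

private lemma stmt_2_aux {Ω : Type*} [MeasurableSpace Ω] (μ : Measure Ω)
    [IsProbabilityMeasure μ]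
    (σ : Ω → Ω) (hσ : Ergodic σ μ) (φ : Ω → ℝ) (hφ : Integrable φ μ) (hm : Measurable φ)
    (c : ℝ) (hc : 0 < c)
    (hpos : 0 < μ {ω | ∀ n : ℕ, 1 ≤ n → c < ∑ k ∈ Finset.range n, φ (σ^[k] ω)}) :
    0 < ∫ ω, φ ω ∂μ := by
  classical
  have hσm : Measurable σ := hσ.toMeasurePreserving.measurable
  have hmp : MeasurePreserving σ μ μ := hσ.toMeasurePreserving
  have MP : ∀ n : ℕ, MeasurePreserving (σ^[n]) μ μ := fun n => hmp.iterate n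
  set B : Set Ω := {ω | ∀ n : ℕ, 1 ≤ n → c < ∑ k ∈ Finset.range n, φ (σ^[k] ω)} with hB
  have hBdef : ∀ ω, ω ∈ B ↔ ∀ n : ℕ, 1 ≤ n → c < ∑ k ∈ Finset.range n, φ (σ^[k] ω) :=
    fun ω => Iff.rfl
  have hBmeas : MeasurableSet B := by
    have : B = ⋂ n ∈ {n : ℕ | 1 ≤ n},
        (fun ω => ∑ k ∈ Finset.range n, φ (σ^[k] ω)) ⁻¹' (Ioi c) := by
      ext ω; simp [hB, mem_iInter]
    rw [this]
    exact MeasurableSet.biInter (to_countable _) fun n _ =>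
      (Finset.measurable_sum _ fun k _ => hm.comp ((MP k).measurable)) measurableSet_Ioi
  set D : ℕ → Set Ω := fun n => {ω | ∀ j ≤ n, σ^[j] ω ∉ B} with hD
  have hDdef : ∀ n ω, ω ∈ D n ↔ ∀ j ≤ n, σ^[j] ω ∉ B := fun n ω => Iff.rfl
  have hDmeas : ∀ n, MeasurableSet (D n) := by
    intro n
    have : D n = ⋂ j ∈ Finset.range (n+1), (σ^[j]) ⁻¹' Bᶜ := by
      ext ω; simp [hD, Nat.lt_succ_iff]
    rw [this]
    exact MeasurableSet.biInter (to_countable _) fun j _ => (MP j).measurable hBmeas.compl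
  have hDanti : Antitone D := fun m n hmn ω hω j hj => hω j (hj.trans hmn)
  have hDsucc : ∀ n, D (n+1) = Bᶜ ∩ σ ⁻¹' (D n) := by
    intro n
    ext ω
    simp only [mem_inter_iff, mem_compl_iff, mem_preimage, hDdef]
    constructor
    · intro h
      refine ⟨by simpa using h 0 (by omega), fun j hj => ?_⟩
      rw [← Function.iterate_succ_apply]
      exact h (j+1) (by omega)
    · rintro ⟨h0, h1⟩ j hj
      match j with
      | 0 => simpa using h0
      | (i+1) =>
        rw [Function.iterate_succ_apply]
        exact h1 i (by omega)
  have hψint : ∀ n : ℕ, Integrable (fun ω => φ (σ^[n] ω)) μ := fun n =>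
    ((MP n).integrable_comp hφ.aestronglyMeasurable).mpr hφ
  set t : ℕ → ℝ := fun n => ∫ ω in D n, φ (σ^[n] ω) ∂μ with ht
  set s : ℕ → ℝ := fun n => ∫ ω in B ∩ σ ⁻¹' (D n), φ (σ^[n+1] ω) ∂μ with hs
  -- recursion
  have hrec : ∀ n, t n = s n + t (n+1) := by
    intro n
    have h1 : t n = ∫ ω, (D n).indicator (fun x => φ (σ^[n] x)) ω ∂μ :=
      (integral_indicator (hDmeas n)).symm
    have h2 : ∫ ω, (D n).indicator (fun x => φ (σ^[n] x)) ω ∂μ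
        = ∫ ω, (D n).indicator (fun x => φ (σ^[n] x)) (σ ω) ∂μ := by
      conv_lhs => rw [← hmp.map_eq]
      exact integral_map hσm.aemeasurable
        (by rw [hmp.map_eq]
            exact ((hm.comp (MP n).measurable).indicator (hDmeas n)).aestronglyMeasurable)
    have h3 : ∀ ω, (D n).indicator (fun x => φ (σ^[n] x)) (σ ω)
        = (σ ⁻¹' D n).indicator (fun x => φ (σ^[n+1] x)) ω := by
      intro ω
      by_cases hω : σ ω ∈ D n <;>
        simp [indicator, hω, Function.iterate_succ_apply]
    have h4 : ∫ ω, (σ ⁻¹' D n).indicator (fun x => φ (σ^[n+1] x)) ω ∂μ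
        = ∫ ω in σ ⁻¹' D n, φ (σ^[n+1] ω) ∂μ :=
      integral_indicator (hσm (hDmeas n))
    have h5 : σ ⁻¹' D n = (B ∩ σ ⁻¹' D n) ∪ D (n+1) := by
      rw [hDsucc n]; ext ω; by_cases hω : ω ∈ B <;> simp [hω]
    have hdisj : Disjoint (B ∩ σ ⁻¹' D n) (D (n+1)) := by
      rw [hDsucc n]
      exact Disjoint.mono inter_subset_left inter_subset_left disjoint_compl_right
    have h6 : ∫ ω in σ ⁻¹' D n, φ (σ^[n+1] ω) ∂μ = s n + t (n+1) := by
      rw [h5, setIntegral_union hdisj (hDmeas (n+1)) ((hψint (n+1)).integrableOn)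
        ((hψint (n+1)).integrableOn)]
    rw [h1, h2]; simp_rw [h3]; rw [h4, h6]
  -- telescoping
  have tele : ∀ N : ℕ, t 0 = (∑ n ∈ Finset.range (N+1), s n) + t (N+1) := by
    intro N
    induction N with
    | zero => simpa using hrec 0
    | succ N ih => rw [ih, hrec (N+1), Finset.sum_range_succ _ (N+1)]; ring
  -- base identity
  have base : ∫ ω, φ ω ∂μ = (∫ ω in B, φ ω ∂μ) + t 0 := by
    have hD0 : D 0 = Bᶜ := by
      ext ω; simp [hDdef, Nat.le_zero]
    have : t 0 = ∫ ω in Bᶜ, φ ω ∂μ := by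
      rw [ht]; simp only [hD0, Function.iterate_zero_apply]
    rw [this, ← integral_add_compl hBmeas hφ]
  -- lower bound for the partial sums
  have claim3 : ∀ N : ℕ, c * (μ B).toReal ≤
      (∫ ω in B, φ ω ∂μ) + ∑ n ∈ Finset.range (N+1), s n := by
    intro N
    set g : Ω → ℝ := fun ω =>
      φ ω + ∑ n ∈ Finset.range (N+1), (σ ⁻¹' D n).indicator (fun x => φ (σ^[n+1] x)) ω with hg
    have hind_int : ∀ n : ℕ, Integrable ((σ ⁻¹' D n).indicator (fun x => φ (σ^[n+1] x))) μ :=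
      fun n => (hψint (n+1)).indicator (hσm (hDmeas n))
    have hgint : Integrable g μ := hφ.add (integrable_finset_sum _ fun n _ => hind_int n)
    have hRHS : (∫ ω in B, φ ω ∂μ) + ∑ n ∈ Finset.range (N+1), s n
        = ∫ ω in B, g ω ∂μ := by
      rw [hg]
      rw [integral_add hφ.integrableOn
        ((integrable_finset_sum _ fun n _ => hind_int n).integrableOn)]
      congr 1
      rw [integral_finset_sum _ fun n _ => (hind_int n).integrableOn]
      apply Finset.sum_congr rfl
      intro n _
      rw [setIntegral_indicator (hσm (hDmeas n))]
    rw [hRHS]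
    have hpt : ∀ ω ∈ B, c ≤ g ω := by
      intro ω hω
      have hQ0 : (fun k => ∀ j, 1 ≤ j → j ≤ k → σ^[j] ω ∉ B) 0 := by intro j hj hj0; omega
      have hQd : ∀ k, (∀ j, 1 ≤ j → j ≤ k+1 → σ^[j] ω ∉ B) →
          (∀ j, 1 ≤ j → j ≤ k → σ^[j] ω ∉ B) :=
        fun k h j h1 h2 => h j h1 (h2.trans (Nat.le_succ k))
      obtain ⟨M, hM1, hMle, hkey⟩ := exists_cutoff'
        (Q := fun k => ∀ j, 1 ≤ j → j ≤ k → σ^[j] ω ∉ B) hQ0 hQd (N+2) (by omega)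
      have hg_eq : g ω = ∑ k ∈ Finset.range (N+2),
          (if k < M then φ (σ^[k] ω) else 0) := by
        rw [Finset.sum_range_succ' (fun k => if k < M then φ (σ^[k] ω) else 0) (N+1)]
        rw [hg]
        simp only [if_pos (show (0:ℕ) < M from hM1), Function.iterate_zero_apply]
        rw [add_comm]
        congr 1
        apply Finset.sum_congr rfl
        intro n hn
        have hmem_range : n + 1 < N + 2 := by
          have := Finset.mem_range.mp hn
          omega
        have : σ ω ∈ D n ↔ (n + 1 < M) := by
          rw [← hkey (n+1) hmem_range]
          rw [hDdef]
          constructor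
          · intro h j h1 h2
            have h3 : j = (j - 1) + 1 := by omega
            rw [h3, Function.iterate_succ_apply]
            exact h (j-1) (by omega)
          · intro h j hj
            rw [← Function.iterate_succ_apply]
            exact h (j+1) (by omega) (by omega)
        by_cases hmem : σ ω ∈ D n
        · rw [indicator_of_mem (mem_preimage.mpr hmem), if_pos (this.mp hmem)]
        · rw [indicator_of_notMem (fun hh => hmem (mem_preimage.mp hh)),
            if_neg (fun hh => hmem (this.mpr hh))]
      have hsum : (∑ k ∈ Finset.range (N+2), (if k < M then φ (σ^[k] ω) else 0))
          = ∑ k ∈ Finset.range M, φ (σ^[k] ω) := by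
        rw [← Finset.sum_filter]
        congr 1
        ext k
        simp only [Finset.mem_filter, Finset.mem_range]
        omega
      rw [hg_eq, hsum]
      exact le_of_lt ((hBdef ω).mp hω M hM1)
    calc c * (μ B).toReal = ∫ _ in B, c ∂μ := by
          rw [setIntegral_const, smul_eq_mul, mul_comm]; rfl
        _ ≤ ∫ ω in B, g ω ∂μ := by
          apply setIntegral_mono_on (integrableOn_const (measure_lt_top μ B).ne)
            hgint.integrableOn hBmeas hpt
  -- the tail tends to zero
  have claim5 : ∀ ε : ℝ, 0 < ε → ∃ N : ℕ, |t (N+1)| ≤ ε := by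
    have hDinf : μ (⋂ n, D n) = 0 := by
      have hsub : (⋂ n, D n) ⊆ σ ⁻¹' (⋂ n, D n) := by
        intro ω hω
        simp only [mem_preimage, mem_iInter] at hω ⊢
        intro n
        rw [hDdef]
        intro j hj
        rw [← Function.iterate_succ_apply]
        exact (hDdef (n+1) ω).mp (hω (n+1)) (j+1) (by omega)
      have hmeas : MeasurableSet (⋂ n, D n) := MeasurableSet.iInter hDmeas
      rcases hσ.ae_empty_or_univ_of_ae_le_preimage hmeas.nullMeasurableSet
          (HasSubset.Subset.eventuallyLE hsub) with h | h
      · exact ae_eq_empty.mp h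
      · exfalso
        have hBc : B ⊆ (⋂ n, D n)ᶜ := by
          intro ω hω hmem
          exact (hDdef 0 ω).mp (mem_iInter.mp hmem 0) 0 le_rfl (by simpa using hω)
        have : μ B = 0 := measure_mono_null hBc (ae_eq_univ.mp h)
        exact absurd this (ne_of_gt hpos)
    have hmin_int : ∀ M : ℕ, Integrable (fun ω => min |φ ω| (M : ℝ)) μ := by
      intro M
      apply hφ.abs.mono ((hm.abs.min measurable_const).aestronglyMeasurable)
      filter_upwards with ω
      simp only [Real.norm_eq_abs]
      rw [abs_of_nonneg (le_min (abs_nonneg _) (Nat.cast_nonneg _))]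
      exact (min_le_left _ _).trans (le_abs_self _)
    set h : ℕ → Ω → ℝ := fun M ω => |φ ω| - min |φ ω| (M : ℝ) with hh
    have hh_nonneg : ∀ M ω, 0 ≤ h M ω := fun M ω => by
      simp [hh, min_le_left]
    have hh_int : ∀ M, Integrable (h M) μ := fun M => hφ.abs.sub (hmin_int M)
    have hδ : Tendsto (fun M : ℕ => ∫ ω, h M ω ∂μ) atTop (𝓝 0) := by
      have h0 : (0 : ℝ) = ∫ (_ : Ω), (0:ℝ) ∂μ := by simp
      rw [h0]
      apply tendsto_integral_of_dominated_convergence (fun ω => |φ ω|)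
        (fun M => (hh_int M).aestronglyMeasurable) hφ.abs
      · intro M
        filter_upwards with ω
        rw [Real.norm_eq_abs, abs_of_nonneg (hh_nonneg M ω)]
        simp [hh, min_le_left, abs_nonneg]
      · filter_upwards with ω
        apply Tendsto.congr' _ tendsto_const_nhds
        filter_upwards [eventually_ge_atTop (Nat.ceil |φ ω|)] with M hM
        have hle : |φ ω| ≤ (M : ℝ) := (Nat.le_ceil _).trans (by exact_mod_cast hM)
        simp [hh, min_eq_left hle]
    have hμD : Tendsto (fun N : ℕ => (μ (D N)).toReal) atTop (𝓝 0) := by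
      have h1 : Tendsto (fun N => μ (D N)) atTop (𝓝 (μ (⋂ n, D n))) :=
        tendsto_measure_iInter_atTop (fun n => (hDmeas n).nullMeasurableSet) hDanti
          ⟨0, measure_ne_top μ _⟩
      rw [hDinf] at h1
      have := (ENNReal.tendsto_toReal (by simp : (0:ℝ≥0∞) ≠ ⊤)).comp h1
      exact this
    have hcomp : ∀ (M N : ℕ), Integrable (fun ω => h M (σ^[N] ω)) μ := fun M N =>
      ((MP N).integrable_comp (hh_int M).aestronglyMeasurable).mpr (hh_int M)
    intro ε hε
    obtain ⟨M, hM⟩ := (hδ.eventually (eventually_lt_nhds (show (0:ℝ) < ε/2 by linarith))).exists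
    have hμ' : ∀ᶠ N : ℕ in atTop, (M : ℝ) * (μ (D N)).toReal < ε/2 := by
      have : Tendsto (fun N : ℕ => (M : ℝ) * (μ (D N)).toReal) atTop (𝓝 0) := by
        simpa using hμD.const_mul (M : ℝ)
      exact this.eventually (eventually_lt_nhds (show (0:ℝ) < ε/2 by linarith))
    obtain ⟨N, hN⟩ := (hμ'.and (eventually_ge_atTop 1)).exists
    obtain ⟨hN1, hN2⟩ := hN
    refine ⟨N - 1, ?_⟩
    have hNeq : N - 1 + 1 = N := by omega
    rw [hNeq]
    have key : |t N| ≤ (M:ℝ) * (μ (D N)).toReal + ∫ ω, h M ω ∂μ := by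
      have step1 : |∫ ω in D N, φ (σ^[N] ω) ∂μ| ≤ ∫ ω in D N, |φ (σ^[N] ω)| ∂μ := by
        simpa [Real.norm_eq_abs] using
          norm_integral_le_integral_norm (μ := μ.restrict (D N)) (f := fun ω => φ (σ^[N] ω))
      have step2 : ∫ ω in D N, |φ (σ^[N] ω)| ∂μ
          ≤ ∫ ω in D N, ((M:ℝ) + h M (σ^[N] ω)) ∂μ := by
        apply setIntegral_mono_on (hψint N).abs.integrableOn
          ((integrable_const _).add (hcomp M N)).integrableOn (hDmeas N)
        intro ω _
        simp only [Pi.add_apply]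
        rcases le_or_gt (|φ (σ^[N] ω)|) (M:ℝ) with hcase | hcase
        · have := hh_nonneg M (σ^[N] ω)
          linarith
        · have hminr : |φ (σ^[N] ω)| ⊓ (M:ℝ) = (M:ℝ) := inf_eq_right.mpr hcase.le
          simp only [hh]
          rw [hminr]
          linarith
      have step3 : ∫ ω in D N, ((M:ℝ) + h M (σ^[N] ω)) ∂μ
          ≤ (M:ℝ) * (μ (D N)).toReal + ∫ ω, h M (σ^[N] ω) ∂μ := by
        rw [integral_add (integrableOn_const (C := (M:ℝ)) (s := D N) (measure_lt_top μ _).ne)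
          ((hcomp M N).integrableOn)]
        rw [setIntegral_const, smul_eq_mul, mul_comm, measureReal_def]
        gcongr _ + ?_
        apply setIntegral_le_integral (hcomp M N)
        filter_upwards with ω using hh_nonneg M _
      have step4 : ∫ ω, h M (σ^[N] ω) ∂μ = ∫ ω, h M ω ∂μ := by
        conv_rhs => rw [← (MP N).map_eq]
        exact (integral_map (MP N).measurable.aemeasurable
          (by rw [(MP N).map_eq]; exact (hh_int M).aestronglyMeasurable)).symm
      calc |t N| ≤ ∫ ω in D N, |φ (σ^[N] ω)| ∂μ := step1
        _ ≤ ∫ ω in D N, ((M:ℝ) + h M (σ^[N] ω)) ∂μ := step2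
        _ ≤ (M:ℝ) * (μ (D N)).toReal + ∫ ω, h M (σ^[N] ω) ∂μ := step3
        _ = (M:ℝ) * (μ (D N)).toReal + ∫ ω, h M ω ∂μ := by rw [step4]
    linarith [key]
  -- conclusion
  have main : ∀ ε : ℝ, 0 < ε → c * (μ B).toReal ≤ (∫ ω, φ ω ∂μ) + ε := by
    intro ε hε
    obtain ⟨N, hN⟩ := claim5 ε hε
    have h3 := claim3 N
    have htel := tele N
    have habs := abs_le.mp hN
    linarith [base, habs.1, habs.2]
  have hfin : c * (μ B).toReal ≤ ∫ ω, φ ω ∂μ :=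
    le_of_forall_pos_le_add main
  have hposR : 0 < c * (μ B).toReal :=
    mul_pos hc (ENNReal.toReal_pos (ne_of_gt hpos) (measure_ne_top μ B))
  linarith

/-- If for some `c > 0` the set of points whose Birkhoff sums all
exceed `c` (for every `n ≥ 1`) has positive measure, then the mean of `φ` is positive. -/
theorem stmt_2 {Ω : Type*} [MeasurableSpace Ω] (μ : Measure Ω) [IsProbabilityMeasure μ]
    (σ : Ω → Ω) (hσ : Ergodic σ μ) (φ : Ω → ℝ) (hφ : Integrable φ μ)
    (c : ℝ) (hc : 0 < c)
    (hpos : 0 < μ {ω | ∀ n : ℕ, 1 ≤ n → c < ∑ k ∈ Finset.range n, φ (σ^[k] ω)}) :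
    0 < ∫ ω, φ ω ∂μ := by
  obtain ⟨φ', hφ'm, heq⟩ := hφ.aestronglyMeasurable
  have hφ' : Integrable φ' μ := hφ.congr heq
  have hInt : ∫ ω, φ ω ∂μ = ∫ ω, φ' ω ∂μ := integral_congr_ae heq
  have MP : ∀ n : ℕ, MeasurePreserving (σ^[n]) μ μ := fun n => hσ.toMeasurePreserving.iterate n
  have hG : μ {ω | ¬ ∀ k : ℕ, φ (σ^[k] ω) = φ' (σ^[k] ω)} = 0 := by
    have hne : μ {ω | φ ω ≠ φ' ω} = 0 := by
      rw [← compl_setOf]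
      exact heq
    refine measure_mono_null (t := ⋃ k : ℕ, (σ^[k]) ⁻¹' {ω | φ ω ≠ φ' ω}) ?_ ?_
    · intro ω hω
      simp only [Set.mem_setOf_eq, not_forall] at hω
      obtain ⟨k, hk⟩ := hω
      exact Set.mem_iUnion.mpr ⟨k, hk⟩
    · exact measure_iUnion_null fun k =>
        (MP k).quasiMeasurePreserving.preimage_null hne
  have hsub : {ω | ∀ n : ℕ, 1 ≤ n → c < ∑ k ∈ Finset.range n, φ (σ^[k] ω)}
      ∩ {ω | ∀ k : ℕ, φ (σ^[k] ω) = φ' (σ^[k] ω)}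
      ⊆ {ω | ∀ n : ℕ, 1 ≤ n → c < ∑ k ∈ Finset.range n, φ' (σ^[k] ω)} := by
    rintro ω ⟨h1, h2⟩ n hn
    have : ∑ k ∈ Finset.range n, φ' (σ^[k] ω) = ∑ k ∈ Finset.range n, φ (σ^[k] ω) :=
      Finset.sum_congr rfl fun k _ => (h2 k).symm
    rw [this]
    exact h1 n hn
  have hpos' : 0 < μ {ω | ∀ n : ℕ, 1 ≤ n → c < ∑ k ∈ Finset.range n, φ' (σ^[k] ω)} := by
    calc 0 < μ {ω | ∀ n : ℕ, 1 ≤ n → c < ∑ k ∈ Finset.range n, φ (σ^[k] ω)} := hpos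
      _ = μ ({ω | ∀ n : ℕ, 1 ≤ n → c < ∑ k ∈ Finset.range n, φ (σ^[k] ω)}
            ∩ {ω | ∀ k : ℕ, φ (σ^[k] ω) = φ' (σ^[k] ω)}) := by
          rw [measure_inter_conull]
          rwa [compl_setOf]
      _ ≤ μ {ω | ∀ n : ℕ, 1 ≤ n → c < ∑ k ∈ Finset.range n, φ' (σ^[k] ω)} :=
          measure_mono hsub
  rw [hInt]
  exact stmt_2_aux μ σ hσ φ' hφ' hφ'm.measurable c hc hpos'
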